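/- Let d ≥ 1 and consider H = (0, ν·x₁^d, x₁^d − x₂^d, (x₁+2x₃)^d, …, (x₁+dx₃)^d, (x₂+x₃)^d, (x₂+2x₃)^d, …, (x₂+dx₃)^d) : K^{2d+2} → K^{2d+2} for some ν ∈ K, char K = 0. Then the Jacobian JH is lower triangular with zeroes on the diagonal; in particular JH is nilpotent and x + H is invertible. -/

import Mathlib

open MvPolynomial Finset

lemma strictLower_pow_zero {n : ℕ} {R : Type*} [CommRing R]
    (M : Matrix (Fin n) (Fin n) R) (h : ∀ p q, p ≤ q → M p q = 0) :
    M ^ n = 0 := by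
  have key : ∀ k : ℕ, ∀ p q : Fin n, p.val < q.val + k → (M ^ k) p q = 0 := by
    intro k
    induction k with
    | zero => intro p q hpq; simp [Matrix.one_apply, Fin.ext_iff]; omega
    | succ k ih =>
      intro p q hpq
      rw [pow_succ, Matrix.mul_apply]
      apply Finset.sum_eq_zero
      intro j _
      by_cases hj : p.val < j.val + k
      · rw [ih p j hj, zero_mul]
      · rw [h j q (by omega : j ≤ q), mul_zero]
  ext p q
  simp only [Matrix.zero_apply]
  exact key n p q (by omega)

set_option maxHeartbeats 1000000 in
theorem stmt18 (K : Type*) [Field K] [CharZero K] (d : ℕ) (hd : 1 ≤ d) (ν : K)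
    (H : Fin (2 * d + 2) → MvPolynomial (Fin (2 * d + 2)) K)
    (hH : ∀ j : Fin (2 * d + 2),
      H j =
        if j.val = 0 then 0
        else if j.val = 1 then C ν * X (⟨0, by omega⟩ : Fin (2 * d + 2)) ^ d
        else if j.val = 2 then
          X (⟨0, by omega⟩ : Fin (2 * d + 2)) ^ d - X (⟨1, by omega⟩ : Fin (2 * d + 2)) ^ d
        else if j.val ≤ d + 1 then
          (X (⟨0, by omega⟩ : Fin (2 * d + 2)) +
            (j.val - 1 : ℕ) • X (⟨2, by omega⟩ : Fin (2 * d + 2))) ^ d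
        else
          (X (⟨1, by omega⟩ : Fin (2 * d + 2)) +
            (j.val - (d + 1) : ℕ) • X (⟨2, by omega⟩ : Fin (2 * d + 2))) ^ d) :
    (∀ p q : Fin (2 * d + 2), p ≤ q → pderiv q (H p) = 0) ∧
    IsNilpotent (Matrix.of fun p q : Fin (2 * d + 2) => pderiv q (H p)) ∧
    ∃ G : Fin (2 * d + 2) → MvPolynomial (Fin (2 * d + 2)) K,
      (∀ j, bind₁ (fun k => X k + H k) (G j) = X j) ∧
      (∀ j, bind₁ G (X j + H j) = X j) := by
  set i0 : Fin (2 * d + 2) := ⟨0, by omega⟩ with hi0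
  set i1 : Fin (2 * d + 2) := ⟨1, by omega⟩ with hi1
  set i2 : Fin (2 * d + 2) := ⟨2, by omega⟩ with hi2
  have hH0 : H i0 = 0 := by rw [hH]; rfl
  have hH1 : H i1 = C ν * X i0 ^ d := by rw [hH]; rfl
  have hH2 : H i2 = X i0 ^ d - X i1 ^ d := by rw [hH]; rfl
  have part1 : ∀ p q : Fin (2 * d + 2), p ≤ q → pderiv q (H p) = 0 := by
    intro p q hpq
    have hpq' : p.val ≤ q.val := hpq
    rw [hH p]
    by_cases h0 : p.val = 0
    · simp [h0]
    by_cases h1 : p.val = 1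
    · have hq0 : i0 ≠ q := by simp [hi0, Fin.ext_iff]; omega
      simp [h0, h1, pderiv_C_mul, pderiv_pow, pderiv_X_of_ne hq0]
    by_cases h2 : p.val = 2
    · have hq0 : i0 ≠ q := by simp [hi0, Fin.ext_iff]; omega
      have hq1 : i1 ≠ q := by simp [hi1, Fin.ext_iff]; omega
      simp [h0, h1, h2, pderiv_pow, pderiv_X_of_ne hq0, pderiv_X_of_ne hq1]
    have hq0 : i0 ≠ q := by simp [hi0, Fin.ext_iff]; omega
    have hq1 : i1 ≠ q := by simp [hi1, Fin.ext_iff]; omega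
    have hq2 : i2 ≠ q := by simp [hi2, Fin.ext_iff]; omega
    by_cases h3 : p.val ≤ d + 1 <;>
      simp [h0, h1, h2, h3, pderiv_pow, map_nsmul, pderiv_X_of_ne hq0,
        pderiv_X_of_ne hq1, pderiv_X_of_ne hq2]
  refine ⟨part1, ⟨2 * d + 2, strictLower_pow_zero _ part1⟩, ?_⟩
  set g1 : MvPolynomial (Fin (2 * d + 2)) K := X i1 - C ν * X i0 ^ d with hg1
  set g2 : MvPolynomial (Fin (2 * d + 2)) K := X i2 - (X i0 ^ d - g1 ^ d) with hg2
  set G : Fin (2 * d + 2) → MvPolynomial (Fin (2 * d + 2)) K := fun j =>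
    if j.val = 0 then X j
    else if j.val = 1 then g1
    else if j.val = 2 then g2
    else if j.val ≤ d + 1 then X j - (X i0 + (j.val - 1 : ℕ) • g2) ^ d
    else X j - (g1 + (j.val - (d + 1) : ℕ) • g2) ^ d with hGdef
  have v0 : (i0 : ℕ) = 0 := rfl
  have v1 : (i1 : ℕ) = 1 := rfl
  have v2 : (i2 : ℕ) = 2 := rfl
  have hG0 : G i0 = X i0 := by rw [hGdef]; simp [v0]
  have hG1 : G i1 = g1 := by rw [hGdef]; simp [v1]
  have hG2 : G i2 = g2 := by rw [hGdef]; simp [v2]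
  have bF0 : bind₁ (fun k => X k + H k) (X i0) = X i0 := by
    rw [bind₁_X_right]; simp [hH0]
  have bF1 : bind₁ (fun k => X k + H k) g1 = X i1 := by
    simp only [hg1, map_sub, map_mul, map_pow, bind₁_X_right, bind₁_C_right]
    simp only [hH0, hH1, add_zero]
    ring
  have bF2 : bind₁ (fun k => X k + H k) g2 = X i2 := by
    simp only [hg2, map_sub, map_pow, bind₁_X_right, bF1]
    simp only [hH0, hH2, add_zero]
    ring
  refine ⟨G, ?_, ?_⟩
  · intro j
    by_cases h0 : j.val = 0
    · have hj : j = i0 := Fin.ext h0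
      rw [hj, hG0, bF0]
    by_cases h1 : j.val = 1
    · have hj : j = i1 := Fin.ext h1
      rw [hj, hG1, bF1]
    by_cases h2 : j.val = 2
    · have hj : j = i2 := Fin.ext h2
      rw [hj, hG2, bF2]
    by_cases h3 : j.val ≤ d + 1
    · have hGj : G j = X j - (X i0 + (j.val - 1 : ℕ) • g2) ^ d := by
        rw [hGdef]; simp [h0, h1, h2, h3]
      rw [hGj]
      simp only [map_sub, map_pow, map_add, map_nsmul, bind₁_X_right, bF0, bF2]
      simp only [hH, h0, h1, h2, h3, if_false, if_true, ite_true, ite_false, hH0, add_zero]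
      ring
    · have hGj : G j = X j - (g1 + (j.val - (d + 1) : ℕ) • g2) ^ d := by
        rw [hGdef]; simp [h0, h1, h2, h3]
      rw [hGj]
      simp only [map_sub, map_pow, map_add, map_nsmul, bind₁_X_right, bF1, bF2]
      simp only [hH, h0, h1, h2, h3, if_false, if_true, ite_true, ite_false]
      ring
  · intro j
    rw [map_add, bind₁_X_right, hH j]
    by_cases h0 : j.val = 0
    · have hj : j = i0 := Fin.ext h0
      rw [if_pos h0]; simp [h0, hj, hG0]
    by_cases h1 : j.val = 1
    · have hj : j = i1 := Fin.ext h1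
      rw [if_neg h0, if_pos h1, map_mul, map_pow, bind₁_C_right, bind₁_X_right, hG0, hj, hG1, hg1]
      ring
    by_cases h2 : j.val = 2
    · have hj : j = i2 := Fin.ext h2
      rw [if_neg h0, if_neg h1, if_pos h2, map_sub, map_pow, map_pow, bind₁_X_right,
        bind₁_X_right, hG0, hG1, hj, hG2, hg2]
      ring
    by_cases h3 : j.val ≤ d + 1
    · rw [if_neg h0, if_neg h1, if_neg h2, if_pos h3, map_pow, map_add, map_nsmul,
        bind₁_X_right, bind₁_X_right, hG0, hG2]
      have hGj : G j = X j - (X i0 + (j.val - 1 : ℕ) • g2) ^ d := by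
        rw [hGdef]; simp [h0, h1, h2, h3]
      rw [hGj]; ring
    · rw [if_neg h0, if_neg h1, if_neg h2, if_neg h3, map_pow, map_add, map_nsmul,
        bind₁_X_right, bind₁_X_right, hG1, hG2]
      have hGj : G j = X j - (g1 + (j.val - (d + 1) : ℕ) • g2) ^ d := by
        rw [hGdef]; simp [h0, h1, h2, h3]
      rw [hGj]; ring
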